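/- For every integer n ≥ 2 and every matrix C in the symmetric Monge polytope SM_n, there exist unique nonnegative real numbers (λ_{a,b}), indexed by pairs a,b ≥ 1 with a+b ≤ n, and (λ_i) for 1 ≤ i ≤ n, with total sum 1, such that C = Σ_{a+b≤n} λ_{a,b} · (1/(2ab)) · NESW(a×b) + Σ_{i=1}^n λ_i · (1/(2n)) · HV(i). -/

import Mathlib

open Finset

/-- The Monge property for an `n × n` real matrix (indices are 0-based). -/
def IsMonge {n : ℕ} (C : Matrix (Fin n) (Fin n) ℝ) : Prop :=
  ∀ i I j J : Fin n, i < I → j < J → C i j + C I J ≤ C i J + C I j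

/-- The symmetric Monge polytope: symmetric matrices with
nonnegative entries summing to 1, and the Monge property. -/
def SM (n : ℕ) : Set (Matrix (Fin n) (Fin n) ℝ) :=
  {C | C.IsSymm ∧ (∀ i j, 0 ≤ C i j) ∧ (∑ i, ∑ j, C i j) = 1 ∧ IsMonge C}

/-- `NESW n a b` is the `n × n` 0/1 matrix whose (1-based) `(k, l)` entry is 1 iff
`(k ≤ a ∧ l > n - b) ∨ (k > n - b ∧ l ≤ a)`. -/
def NESW (n a b : ℕ) : Matrix (Fin n) (Fin n) ℝ :=
  Matrix.of fun k l =>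
    if (k.val + 1 ≤ a ∧ n - b < l.val + 1) ∨ (n - b < k.val + 1 ∧ l.val + 1 ≤ a) then 1 else 0

/-- `HV n i` is the `n × n` matrix whose (1-based) `(k, l)` entry is `[k = i] + [l = i]`. -/
def HV (n i : ℕ) : Matrix (Fin n) (Fin n) ℝ :=
  Matrix.of fun k l =>
    (if k.val + 1 = i then 1 else 0) + (if l.val + 1 = i then 1 else 0)

/-- The index set of pairs `(a, b)` with `a, b ≥ 1` and `a + b ≤ n`. -/
def idx (n : ℕ) : Finset (ℕ × ℕ) :=
  (Finset.range (n + 1) ×ˢ Finset.range (n + 1)).filter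
    fun ab => 1 ≤ ab.1 ∧ 1 ≤ ab.2 ∧ ab.1 + ab.2 ≤ n

namespace AuxSM

variable {n : ℕ}

lemma mem_idx {ab : ℕ × ℕ} : ab ∈ idx n ↔ 1 ≤ ab.1 ∧ 1 ≤ ab.2 ∧ ab.1 + ab.2 ≤ n := by
  simp only [idx, Finset.mem_filter, Finset.mem_product, Finset.mem_range]
  omega

noncomputable def cext (n : ℕ) (M : Matrix (Fin n) (Fin n) ℝ) (k l : ℕ) : ℝ :=
  if h : k < n ∧ l < n then M ⟨k, h.1⟩ ⟨l, h.2⟩ else 0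

noncomputable def dd (n : ℕ) (M : Matrix (Fin n) (Fin n) ℝ) (p q : ℕ) : ℝ :=
  cext n M p (q+1) + cext n M (p+1) q - cext n M p q - cext n M (p+1) (q+1)

lemma cext_eq (M : Matrix (Fin n) (Fin n) ℝ) {k l : ℕ} (hk : k < n) (hl : l < n) :
    cext n M k l = M ⟨k, hk⟩ ⟨l, hl⟩ := dif_pos ⟨hk, hl⟩

lemma dd_eq (M : Matrix (Fin n) (Fin n) ℝ) {p q : ℕ} (hp : p + 1 < n) (hq : q + 1 < n) :
    dd n M p q = M ⟨p, by omega⟩ ⟨q+1, hq⟩ + M ⟨p+1, hp⟩ ⟨q, by omega⟩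
      - M ⟨p, by omega⟩ ⟨q, by omega⟩ - M ⟨p+1, hp⟩ ⟨q+1, hq⟩ := by
  unfold dd
  rw [cext_eq M (by omega) hq, cext_eq M hp (by omega), cext_eq M (by omega) (by omega),
    cext_eq M hp hq]

noncomputable def lam1 (n : ℕ) (C : Matrix (Fin n) (Fin n) ℝ) : ℕ × ℕ → ℝ := fun ab =>
  if ab ∈ idx n then
    (if ab.1 + ab.2 = n then 1 else 2) * ab.1 * ab.2 * dd n C (ab.1 - 1) (n - ab.2 - 1)
  else 0

noncomputable def lam2 (n : ℕ) (C : Matrix (Fin n) (Fin n) ℝ) : ℕ → ℝ := fun i =>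
  if i ∈ Finset.Icc 1 n then (n : ℝ) * cext n C (i - 1) (i - 1) else 0

lemma NESW_apply_le {a b : ℕ} (hab : a + b ≤ n) {k l : Fin n} (hkl : k.val ≤ l.val) :
    NESW n a b k l = if k.val + 1 ≤ a ∧ n - b ≤ l.val then 1 else 0 := by
  simp only [NESW, Matrix.of_apply]
  apply if_congr _ rfl rfl
  omega

lemma NESW_diag {a b : ℕ} (hab : a + b ≤ n) (k : Fin n) : NESW n a b k k = 0 := by
  simp only [NESW, Matrix.of_apply]
  rw [if_neg]; omega

lemma NESW_symm (a b : ℕ) (k l : Fin n) : NESW n a b k l = NESW n a b l k := by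
  simp only [NESW, Matrix.of_apply]
  apply if_congr _ rfl rfl
  tauto

lemma HV_symm (i : ℕ) (k l : Fin n) : HV n i k l = HV n i l k := by
  simp only [HV, Matrix.of_apply]; ring

lemma dd_NESW {a b p q : ℕ} (hab : a + b ≤ n) (hp : p + 1 < n) (hq : q + 1 < n) :
    dd n (NESW n a b) p q =
      (if p + 1 = a ∧ q + 1 = n - b then 1 else 0)
      + (if p + 1 = n - b ∧ q + 1 = a then 1 else 0) := by
  rw [dd_eq _ hp hq]
  simp only [NESW, Matrix.of_apply]
  split_ifs <;> norm_num <;> omega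

lemma dd_HV (i : ℕ) {p q : ℕ} (hp : p + 1 < n) (hq : q + 1 < n) :
    dd n (HV n i) p q = 0 := by
  rw [dd_eq _ hp hq]
  simp only [HV, Matrix.of_apply]
  ring

end AuxSM
open Finset
section
variable {n : ℕ}

lemma count_le (a : ℕ) (ha : a ≤ n) :
    ∑ k : Fin n, (if k.val + 1 ≤ a then (1:ℝ) else 0) = a := by
  rw [Fin.sum_univ_eq_sum_range (fun k => if k + 1 ≤ a then (1:ℝ) else 0) n]
  rw [← Finset.sum_filter]
  have : (Finset.range n).filter (fun i => i + 1 ≤ a) = Finset.range a := by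
    ext i; simp [Finset.mem_range]; omega
  rw [this, Finset.sum_const, Finset.card_range]
  simp

lemma count_gt (b : ℕ) (hb : b ≤ n) :
    ∑ l : Fin n, (if n - b < l.val + 1 then (1:ℝ) else 0) = b := by
  rw [Fin.sum_univ_eq_sum_range (fun i => if n - b < i + 1 then (1:ℝ) else 0) n]
  rw [← Finset.sum_filter]
  have : (Finset.range n).filter (fun i => n - b < i + 1) = Finset.Ico (n - b) n := by
    ext i; simp [Finset.mem_range, Finset.mem_Ico]; omega
  rw [this, Finset.sum_const, Nat.card_Ico]
  have : n - (n - b) = b := by omega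
  rw [this]; simp

lemma count_eq (i : ℕ) (hi1 : 1 ≤ i) (hi2 : i ≤ n) :
    ∑ k : Fin n, (if k.val + 1 = i then (1:ℝ) else 0) = 1 := by
  rw [Fin.sum_univ_eq_sum_range (fun k => if k + 1 = i then (1:ℝ) else 0) n]
  rw [← Finset.sum_filter]
  have : (Finset.range n).filter (fun k => k + 1 = i) = {i - 1} := by
    ext k; simp [Finset.mem_range]; omega
  rw [this, Finset.sum_singleton]

lemma NESW_split {a b : ℕ} (hab : a + b ≤ n) (k l : Fin n) :
    NESW n a b k l = (if k.val + 1 ≤ a then (1:ℝ) else 0) * (if n - b < l.val + 1 then 1 else 0)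
      + (if n - b < k.val + 1 then (1:ℝ) else 0) * (if l.val + 1 ≤ a then 1 else 0) := by
  simp only [NESW, Matrix.of_apply]
  split_ifs <;> norm_num <;> omega

lemma sum_NESW {a b : ℕ} (ha : 1 ≤ a) (hb : 1 ≤ b) (hab : a + b ≤ n) :
    ∑ k : Fin n, ∑ l : Fin n, NESW n a b k l = 2 * a * b := by
  have h1 : ∀ k l : Fin n, NESW n a b k l =
      (if k.val + 1 ≤ a then (1:ℝ) else 0) * (if n - b < l.val + 1 then 1 else 0)
      + (if n - b < k.val + 1 then (1:ℝ) else 0) * (if l.val + 1 ≤ a then 1 else 0) :=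
    fun k l => NESW_split hab k l
  have ha' : a ≤ n := by omega
  have hb' : b ≤ n := by omega
  simp_rw [h1, Finset.sum_add_distrib, ← Finset.sum_mul_sum,
    count_le a ha', count_gt b hb']
  ring

lemma sum_HV {i : ℕ} (hi1 : 1 ≤ i) (hi2 : i ≤ n) :
    ∑ k : Fin n, ∑ l : Fin n, HV n i k l = 2 * n := by
  simp only [HV, Matrix.of_apply]
  simp only [Finset.sum_add_distrib, Finset.sum_const, Finset.card_univ, Fintype.card_fin,
    count_eq i hi1 hi2, nsmul_eq_mul, mul_one, ← Finset.mul_sum]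
  ring
end
open Finset
namespace AuxSM
variable {n : ℕ} {C : Matrix (Fin n) (Fin n) ℝ}

lemma cext_symm (hs : C.IsSymm) (k l : ℕ) : cext n C k l = cext n C l k := by
  unfold cext
  by_cases h : k < n ∧ l < n
  · rw [dif_pos h, dif_pos (⟨h.2, h.1⟩ : l < n ∧ k < n)]
    exact (hs.apply _ _).symm
  · rw [dif_neg h, dif_neg (by tauto)]

lemma dd_symm (hs : C.IsSymm) (p q : ℕ) : dd n C p q = dd n C q p := by
  unfold dd
  rw [cext_symm hs p (q+1), cext_symm hs (p+1) q, cext_symm hs p q, cext_symm hs (p+1) (q+1)]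
  ring

lemma tele (g : ℕ → ℝ) {k l : ℕ} (h : k ≤ l) :
    ∑ q ∈ Finset.Ico k l, (g (q+1) - g q) = g l - g k := by
  induction l, h using Nat.le_induction with
  | base => simp
  | succ m hm ih => rw [Finset.sum_Ico_succ_top (by omega), ih]; ring

lemma tele' (g : ℕ → ℝ) {k l : ℕ} (h : k ≤ l) :
    ∑ q ∈ Finset.Ico k l, (g q - g (q+1)) = g k - g l := by
  have h1 : ∀ q ∈ Finset.Ico k l, g q - g (q+1) = -(g (q+1) - g q) := fun q _ => by ring
  rw [Finset.sum_congr rfl h1, Finset.sum_neg_distrib, tele g h]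
  ring

lemma sum_sq (M : Matrix (Fin n) (Fin n) ℝ) {k l : ℕ} (h : k ≤ l) :
    ∑ p ∈ Finset.Ico k l, ∑ q ∈ Finset.Ico k l, dd n M p q
      = cext n M k l - cext n M l l - cext n M k k + cext n M l k := by
  have inner : ∀ p, ∑ q ∈ Finset.Ico k l, dd n M p q
      = ((cext n M p l - cext n M (p+1) l) - (cext n M p k - cext n M (p+1) k)) := by
    intro p
    have h1 : ∀ q ∈ Finset.Ico k l, dd n M p q
        = ((fun q => cext n M p q - cext n M (p+1) q) (q+1)
          - (fun q => cext n M p q - cext n M (p+1) q) q) := by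
      intro q _; simp only [dd]; ring
    rw [Finset.sum_congr rfl h1, tele (fun q => cext n M p q - cext n M (p+1) q) h]
  rw [Finset.sum_congr rfl (fun p _ => inner p), Finset.sum_sub_distrib,
    tele' (fun p => cext n M p l) h, tele' (fun p => cext n M p k) h]
  ring
end AuxSM
open Finset
namespace AuxSM
variable {n : ℕ} {C : Matrix (Fin n) (Fin n) ℝ}

lemma star (hs : C.IsSymm) (k l : Fin n) (hkl : (k : ℕ) ≤ (l : ℕ)) :
    ∑ ab ∈ idx n, lam1 n C ab * ((1 / (2 * (ab.1 : ℝ) * (ab.2 : ℝ))) * NESW n ab.1 ab.2 k l)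
      = C k l - (C k k + C l l) / 2 := by
  set W : ℕ × ℕ → ℝ := fun pq => (if pq.1 = pq.2 then (1/2 : ℝ) else 1) * dd n C pq.1 pq.2 with hW
  -- Step 1: rewrite each term as an indicator
  have hterm : ∀ ab ∈ idx n,
      lam1 n C ab * ((1 / (2 * (ab.1 : ℝ) * (ab.2 : ℝ))) * NESW n ab.1 ab.2 k l)
        = if ((k : ℕ) + 1 ≤ ab.1 ∧ n - ab.2 ≤ (l : ℕ)) then W (ab.1 - 1, n - ab.2 - 1) else 0 := by
    intro ab hab
    obtain ⟨a, b⟩ := ab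
    obtain ⟨ha, hb, hab'⟩ := mem_idx.mp hab
    have hA : (a : ℝ) ≠ 0 := Nat.cast_ne_zero.mpr (by omega)
    have hB : (b : ℝ) ≠ 0 := Nat.cast_ne_zero.mpr (by omega)
    rw [NESW_apply_le hab' hkl]
    simp only [lam1, if_pos hab, hW]
    by_cases h1 : ((k : ℕ) + 1 ≤ a ∧ n - b ≤ (l : ℕ))
    · rw [if_pos h1, if_pos h1]
      by_cases h2 : a + b = n
      · rw [if_pos h2, if_pos (show a - 1 = n - b - 1 by omega)]
        field_simp
        try ring
      · rw [if_neg h2, if_neg (show ¬ (a - 1 = n - b - 1) by omega)]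
        field_simp
        try ring
    · rw [if_neg h1, if_neg h1, mul_zero, mul_zero]
  rw [Finset.sum_congr rfl hterm, ← Finset.sum_filter]
  -- Step 2: reindex to the triangle k ≤ p ≤ q < l
  set sq := Finset.Ico (k : ℕ) (l : ℕ) ×ˢ Finset.Ico (k : ℕ) (l : ℕ) with hsq
  have hln : (l : ℕ) < n := l.isLt
  have hbij : ∑ ab ∈ (idx n).filter (fun ab => (k : ℕ) + 1 ≤ ab.1 ∧ n - ab.2 ≤ (l : ℕ)),
        W (ab.1 - 1, n - ab.2 - 1)
      = ∑ pq ∈ sq.filter (fun pq => pq.1 ≤ pq.2), W pq := by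
    apply Finset.sum_nbij' (fun ab => (ab.1 - 1, n - ab.2 - 1)) (fun pq => (pq.1 + 1, n - 1 - pq.2))
    · intro ab hab
      simp only [Finset.mem_filter, mem_idx, Finset.mem_product, Finset.mem_Ico, hsq] at hab ⊢
      omega
    · intro pq hpq
      simp only [Finset.mem_filter, mem_idx, Finset.mem_product, Finset.mem_Ico, hsq] at hpq ⊢
      omega
    · rintro ⟨a, b⟩ hab
      simp only [Finset.mem_filter, mem_idx] at hab
      simp only [Prod.mk.injEq]
      omega
    · rintro ⟨p, q⟩ hpq
      simp only [Finset.mem_filter, Finset.mem_product, Finset.mem_Ico, hsq] at hpq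
      simp only [Prod.mk.injEq]
      omega
    · intro ab _
      rfl
  rw [hbij]
  -- Step 3: triangle sum = half of the square sum
  have hE : ∑ pq ∈ sq.filter (fun pq => pq.1 ≤ pq.2), W pq
      = (1/2) * (∑ pq ∈ sq.filter (fun pq => pq.1 = pq.2), dd n C pq.1 pq.2)
        + ∑ pq ∈ sq.filter (fun pq => pq.1 < pq.2), dd n C pq.1 pq.2 := by
    have hsetEq : (sq.filter (fun pq => pq.1 ≤ pq.2)).filter (fun pq : ℕ × ℕ => pq.1 = pq.2)
        = sq.filter (fun pq : ℕ × ℕ => pq.1 = pq.2) := by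
      ext pq; simp only [Finset.mem_filter]
      exact ⟨fun h => ⟨h.1.1, h.2⟩, fun h => ⟨⟨h.1, le_of_eq h.2⟩, h.2⟩⟩
    have hsetLt : (sq.filter (fun pq => pq.1 ≤ pq.2)).filter (fun pq : ℕ × ℕ => ¬ pq.1 = pq.2)
        = sq.filter (fun pq : ℕ × ℕ => pq.1 < pq.2) := by
      ext pq; simp only [Finset.mem_filter]
      exact ⟨fun h => ⟨h.1.1, lt_of_le_of_ne h.1.2 h.2⟩,
        fun h => ⟨⟨h.1, le_of_lt h.2⟩, ne_of_lt h.2⟩⟩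
    rw [← Finset.sum_filter_add_sum_filter_not (sq.filter (fun pq => pq.1 ≤ pq.2))
      (fun pq => pq.1 = pq.2), hsetEq, hsetLt]
    congr 1
    · rw [Finset.mul_sum]
      apply Finset.sum_congr rfl
      intro pq hpq
      simp only [Finset.mem_filter] at hpq
      rw [hW]
      simp only [if_pos hpq.2]
      try ring
    · apply Finset.sum_congr rfl
      intro pq hpq
      simp only [Finset.mem_filter] at hpq
      rw [hW]
      simp only [if_neg (show ¬ pq.1 = pq.2 by omega)]
      try ring
  have hT : ∑ pq ∈ sq, dd n C pq.1 pq.2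
      = (∑ pq ∈ sq.filter (fun pq => pq.1 = pq.2), dd n C pq.1 pq.2)
        + 2 * ∑ pq ∈ sq.filter (fun pq => pq.1 < pq.2), dd n C pq.1 pq.2 := by
    rw [← Finset.sum_filter_add_sum_filter_not sq (fun pq => pq.1 < pq.2)]
    have hswap : ∑ pq ∈ sq.filter (fun pq => ¬ pq.1 < pq.2), dd n C pq.1 pq.2
        = ∑ pq ∈ sq.filter (fun pq => pq.1 ≤ pq.2), dd n C pq.1 pq.2 := by
      apply Finset.sum_nbij' (fun pq : ℕ × ℕ => (pq.2, pq.1)) (fun pq : ℕ × ℕ => (pq.2, pq.1))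
      · intro pq hpq
        simp only [Finset.mem_filter, Finset.mem_product, Finset.mem_Ico, hsq] at hpq ⊢
        omega
      · intro pq hpq
        simp only [Finset.mem_filter, Finset.mem_product, Finset.mem_Ico, hsq] at hpq ⊢
        omega
      · intro pq _; rfl
      · intro pq _; rfl
      · intro pq _; exact dd_symm hs _ _
    rw [hswap]
    have h2 : ∑ pq ∈ sq.filter (fun pq => pq.1 ≤ pq.2), dd n C pq.1 pq.2
        = (∑ pq ∈ sq.filter (fun pq => pq.1 = pq.2), dd n C pq.1 pq.2)
          + ∑ pq ∈ sq.filter (fun pq => pq.1 < pq.2), dd n C pq.1 pq.2 := by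
      have hsetEq : (sq.filter (fun pq => pq.1 ≤ pq.2)).filter (fun pq : ℕ × ℕ => pq.1 = pq.2)
          = sq.filter (fun pq : ℕ × ℕ => pq.1 = pq.2) := by
        ext pq; simp only [Finset.mem_filter]
        exact ⟨fun h => ⟨h.1.1, h.2⟩, fun h => ⟨⟨h.1, le_of_eq h.2⟩, h.2⟩⟩
      have hsetLt : (sq.filter (fun pq => pq.1 ≤ pq.2)).filter (fun pq : ℕ × ℕ => ¬ pq.1 = pq.2)
          = sq.filter (fun pq : ℕ × ℕ => pq.1 < pq.2) := by
        ext pq; simp only [Finset.mem_filter]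
        exact ⟨fun h => ⟨h.1.1, lt_of_le_of_ne h.1.2 h.2⟩,
          fun h => ⟨⟨h.1, le_of_lt h.2⟩, ne_of_lt h.2⟩⟩
      rw [← Finset.sum_filter_add_sum_filter_not (sq.filter (fun pq => pq.1 ≤ pq.2))
        (fun pq => pq.1 = pq.2), hsetEq, hsetLt]
    rw [h2]
    ring
  -- Step 4: telescoping the square sum
  have hsq' : ∑ pq ∈ sq, dd n C pq.1 pq.2 = 2 * C k l - C k k - C l l := by
    rw [hsq, Finset.sum_product]
    dsimp only
    rw [sum_sq C hkl]
    rw [cext_eq C k.isLt l.isLt, cext_eq C l.isLt l.isLt, cext_eq C k.isLt k.isLt,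
      cext_eq C l.isLt k.isLt]
    have : C ⟨(l : ℕ), l.isLt⟩ ⟨(k : ℕ), k.isLt⟩ = C ⟨(k : ℕ), k.isLt⟩ ⟨(l : ℕ), l.isLt⟩ :=
      hs.apply _ _
    rw [this]
    simp only [Fin.eta]
    ring
  have hfin : ∑ pq ∈ sq.filter (fun pq => pq.1 ≤ pq.2), W pq
      = (1/2) * ∑ pq ∈ sq, dd n C pq.1 pq.2 := by
    rw [hE]
    have := hT
    linarith
  rw [hfin, hsq']
  ring

end AuxSM
open Finset
namespace AuxSM
variable {n : ℕ} {C : Matrix (Fin n) (Fin n) ℝ}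

lemma HV_part (hn : 1 ≤ n) (C : Matrix (Fin n) (Fin n) ℝ) (k l : Fin n) :
    ∑ i ∈ Finset.Icc 1 n, lam2 n C i * ((1 / (2 * (n : ℝ))) * HV n i k l)
      = (C k k + C l l) / 2 := by
  have hterm : ∀ i ∈ Finset.Icc 1 n, lam2 n C i * ((1 / (2 * (n : ℝ))) * HV n i k l)
      = (if (k : ℕ) + 1 = i then (n : ℝ) * cext n C (i-1) (i-1) * (1/(2*(n:ℝ))) else 0)
        + (if (l : ℕ) + 1 = i then (n : ℝ) * cext n C (i-1) (i-1) * (1/(2*(n:ℝ))) else 0) := by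
    intro i hi
    simp only [lam2, if_pos hi, HV, Matrix.of_apply]
    split_ifs <;> ring
  rw [Finset.sum_congr rfl hterm, Finset.sum_add_distrib, Finset.sum_ite_eq, Finset.sum_ite_eq]
  rw [if_pos (by simp [Finset.mem_Icc] : (k : ℕ) + 1 ∈ Finset.Icc 1 n),
    if_pos (by simp [Finset.mem_Icc] : (l : ℕ) + 1 ∈ Finset.Icc 1 n)]
  simp only [Nat.add_sub_cancel]
  rw [cext_eq C k.isLt k.isLt, cext_eq C l.isLt l.isLt]
  simp only [Fin.eta]
  have hn0 : (n : ℝ) ≠ 0 := Nat.cast_ne_zero.mpr (by omega)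
  field_simp

lemma exist_eq (hn : 2 ≤ n) (hC : C ∈ SM n) :
    C = (∑ ab ∈ idx n, lam1 n C ab • ((1 / (2 * (ab.1 : ℝ) * (ab.2 : ℝ))) • NESW n ab.1 ab.2)) +
        ∑ i ∈ Finset.Icc 1 n, lam2 n C i • ((1 / (2 * (n : ℝ))) • HV n i) := by
  obtain ⟨hs, hnn, hsum, hM⟩ := hC
  ext k l
  rw [Matrix.add_apply, Matrix.sum_apply, Matrix.sum_apply]
  simp only [Matrix.smul_apply, smul_eq_mul]
  rcases le_or_gt (k : ℕ) (l : ℕ) with hkl | hkl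
  · rw [star hs k l hkl, HV_part (by omega) C k l]
    ring
  · have h1 : ∀ ab ∈ idx n,
        lam1 n C ab * ((1 / (2 * (ab.1 : ℝ) * (ab.2 : ℝ))) * NESW n ab.1 ab.2 k l)
          = lam1 n C ab * ((1 / (2 * (ab.1 : ℝ) * (ab.2 : ℝ))) * NESW n ab.1 ab.2 l k) := by
      intro ab _; rw [NESW_symm]
    have h2 : ∀ i ∈ Finset.Icc 1 n,
        lam2 n C i * ((1 / (2 * (n : ℝ))) * HV n i k l)
          = lam2 n C i * ((1 / (2 * (n : ℝ))) * HV n i l k) := by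
      intro i _; rw [HV_symm]
    rw [Finset.sum_congr rfl h1, Finset.sum_congr rfl h2, star hs l k (le_of_lt hkl),
      HV_part (by omega) C l k]
    have := hs.apply l k
    linarith

lemma lam1_nonneg (hC : C ∈ SM n) (ab : ℕ × ℕ) : 0 ≤ lam1 n C ab := by
  obtain ⟨hs, hnn, hsum, hM⟩ := hC
  obtain ⟨a, b⟩ := ab
  unfold lam1
  split_ifs with h h2
  · obtain ⟨ha, hb, hab⟩ := mem_idx.mp h
    have hp : (a - 1) + 1 < n := by omega
    have hq : (n - b - 1) + 1 < n := by omega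
    have hdd : 0 ≤ dd n C (a-1) (n-b-1) := by
      rw [dd_eq C hp hq]
      have := hM ⟨a-1, by omega⟩ ⟨a-1+1, hp⟩ ⟨n-b-1, by omega⟩ ⟨n-b-1+1, hq⟩
        (by simp [Fin.lt_def]) (by simp [Fin.lt_def])
      linarith
    have : (0:ℝ) ≤ 1 := by norm_num
    positivity
  · obtain ⟨ha, hb, hab⟩ := mem_idx.mp h
    have hp : (a - 1) + 1 < n := by omega
    have hq : (n - b - 1) + 1 < n := by omega
    have hdd : 0 ≤ dd n C (a-1) (n-b-1) := by
      rw [dd_eq C hp hq]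
      have := hM ⟨a-1, by omega⟩ ⟨a-1+1, hp⟩ ⟨n-b-1, by omega⟩ ⟨n-b-1+1, hq⟩
        (by simp [Fin.lt_def]) (by simp [Fin.lt_def])
      linarith
    positivity
  · exact le_refl 0

lemma lam2_nonneg (hC : C ∈ SM n) (i : ℕ) : 0 ≤ lam2 n C i := by
  obtain ⟨hs, hnn, hsum, hM⟩ := hC
  unfold lam2
  split_ifs with h
  · simp only [Finset.mem_Icc] at h
    have hi : i - 1 < n := by omega
    rw [cext_eq C hi hi]
    have := hnn ⟨i-1, hi⟩ ⟨i-1, hi⟩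
    positivity
  · exact le_refl 0

lemma total (hn : 2 ≤ n) (l1 : ℕ × ℕ → ℝ) (l2 : ℕ → ℝ)
    (hsum : (∑ i, ∑ j, C i j) = 1)
    (hEq : C = (∑ ab ∈ idx n, l1 ab • ((1 / (2 * (ab.1 : ℝ) * (ab.2 : ℝ))) • NESW n ab.1 ab.2)) +
          ∑ i ∈ Finset.Icc 1 n, l2 i • ((1 / (2 * (n : ℝ))) • HV n i)) :
    ((∑ ab ∈ idx n, l1 ab) + ∑ i ∈ Finset.Icc 1 n, l2 i) = 1 := by
  rw [← hsum, hEq]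
  simp only [Matrix.add_apply, Matrix.sum_apply, Matrix.smul_apply, smul_eq_mul,
    Finset.sum_add_distrib]
  congr 1
  · have e1 : ∀ k : Fin n, ∑ l : Fin n, ∑ ab ∈ idx n,
        l1 ab * ((1 / (2 * (ab.1 : ℝ) * (ab.2 : ℝ))) * NESW n ab.1 ab.2 k l)
        = ∑ ab ∈ idx n, ∑ l : Fin n,
        l1 ab * ((1 / (2 * (ab.1 : ℝ) * (ab.2 : ℝ))) * NESW n ab.1 ab.2 k l) :=
      fun k => Finset.sum_comm
    rw [Finset.sum_congr rfl (fun k _ => e1 k), Finset.sum_comm]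
    apply Finset.sum_congr rfl
    intro ab hab
    obtain ⟨ha, hb, hab'⟩ := mem_idx.mp hab
    simp only [← Finset.mul_sum]
    rw [show (∑ k : Fin n, ∑ l : Fin n, NESW n ab.1 ab.2 k l) = 2 * ab.1 * ab.2 from
      sum_NESW ha hb hab']
    have hA : (ab.1 : ℝ) ≠ 0 := Nat.cast_ne_zero.mpr (by omega)
    have hB : (ab.2 : ℝ) ≠ 0 := Nat.cast_ne_zero.mpr (by omega)
    field_simp
  · have e1 : ∀ k : Fin n, ∑ l : Fin n, ∑ i ∈ Finset.Icc 1 n,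
        l2 i * ((1 / (2 * (n : ℝ))) * HV n i k l)
        = ∑ i ∈ Finset.Icc 1 n, ∑ l : Fin n, l2 i * ((1 / (2 * (n : ℝ))) * HV n i k l) :=
      fun k => Finset.sum_comm
    rw [Finset.sum_congr rfl (fun k _ => e1 k), Finset.sum_comm]
    apply Finset.sum_congr rfl
    intro i hi
    simp only [Finset.mem_Icc] at hi
    simp only [← Finset.mul_sum]
    rw [show (∑ k : Fin n, ∑ l : Fin n, HV n i k l) = 2 * n from sum_HV hi.1 hi.2]
    have hn0 : (n : ℝ) ≠ 0 := Nat.cast_ne_zero.mpr (by omega)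
    field_simp

end AuxSM
open Finset
namespace AuxSM
variable {n : ℕ} {C : Matrix (Fin n) (Fin n) ℝ}

lemma uniq (hn : 2 ≤ n) (hC : C ∈ SM n) (lm : (ℕ × ℕ → ℝ) × (ℕ → ℝ))
    (h3 : ∀ ab ∉ idx n, lm.1 ab = 0) (h4 : ∀ i ∉ Finset.Icc 1 n, lm.2 i = 0)
    (h6 : C = (∑ ab ∈ idx n,
            lm.1 ab • ((1 / (2 * (ab.1 : ℝ) * (ab.2 : ℝ))) • NESW n ab.1 ab.2)) +
          ∑ i ∈ Finset.Icc 1 n, lm.2 i • ((1 / (2 * (n : ℝ))) • HV n i)) :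
    lm = (lam1 n C, lam2 n C) := by
  have hn0 : (n : ℝ) ≠ 0 := Nat.cast_ne_zero.mpr (by omega)
  -- diagonal entries recover lm.2
  have diag : ∀ k : Fin n, lm.2 ((k : ℕ) + 1) = n * C k k := by
    intro k
    have hk : C k k = (((∑ ab ∈ idx n,
          lm.1 ab • ((1 / (2 * (ab.1 : ℝ) * (ab.2 : ℝ))) • NESW n ab.1 ab.2)) +
          ∑ i ∈ Finset.Icc 1 n, lm.2 i • ((1 / (2 * (n : ℝ))) • HV n i)) : Matrix (Fin n) (Fin n) ℝ) k k := by
      rw [← h6]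
    rw [Matrix.add_apply, Matrix.sum_apply, Matrix.sum_apply] at hk
    simp only [Matrix.smul_apply, smul_eq_mul] at hk
    have hz : ∀ ab ∈ idx n,
        lm.1 ab * ((1 / (2 * (ab.1 : ℝ) * (ab.2 : ℝ))) * NESW n ab.1 ab.2 k k) = 0 := by
      intro ab hab
      rw [NESW_diag (mem_idx.mp hab).2.2 k]
      ring
    have hh : ∀ i ∈ Finset.Icc 1 n,
        lm.2 i * ((1 / (2 * (n : ℝ))) * HV n i k k)
          = if (k : ℕ) + 1 = i then lm.2 i * (1 / (n : ℝ)) else 0 := by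
      intro i hi
      simp only [HV, Matrix.of_apply]
      split_ifs with hki
      · field_simp
        ring
      · ring
    rw [Finset.sum_congr rfl hz, Finset.sum_congr rfl hh, Finset.sum_const_zero,
      Finset.sum_ite_eq, if_pos (by simp [Finset.mem_Icc] : (k : ℕ) + 1 ∈ Finset.Icc 1 n)]
      at hk
    rw [hk]
    field_simp
    ring
  -- key identity recovers lm.1
  have key1 : ∀ a b : ℕ, (a, b) ∈ idx n →
      dd n C (a - 1) (n - b - 1)
        = lm.1 (a, b) * ((1 / (2 * (a : ℝ) * (b : ℝ))) * (1 + if a + b = n then 1 else 0)) := by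
    intro a b hmem
    obtain ⟨ha, hb, hab⟩ := mem_idx.mp hmem
    have hp : (a - 1) + 1 < n := by omega
    have hq : (n - b - 1) + 1 < n := by omega
    have hpa : (a - 1) + 1 = a := by omega
    have hqb : (n - b - 1) + 1 = n - b := by omega
    have hc : ∀ M : Matrix (Fin n) (Fin n) ℝ, dd n M (a-1) (n-b-1)
        = M ⟨a-1, by omega⟩ ⟨(n-b-1)+1, hq⟩ + M ⟨(a-1)+1, hp⟩ ⟨n-b-1, by omega⟩
          - M ⟨a-1, by omega⟩ ⟨n-b-1, by omega⟩ - M ⟨(a-1)+1, hp⟩ ⟨(n-b-1)+1, hq⟩ :=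
      fun M => dd_eq M hp hq
    have key : dd n C (a-1) (n-b-1)
        = ∑ ab' ∈ idx n, lm.1 ab' * ((1 / (2 * (ab'.1 : ℝ) * (ab'.2 : ℝ)))
            * dd n (NESW n ab'.1 ab'.2) (a-1) (n-b-1))
          + ∑ i ∈ Finset.Icc 1 n, lm.2 i * ((1 / (2 * (n : ℝ)))
            * dd n (HV n i) (a-1) (n-b-1)) := by
      simp only [hc]
      rw [h6]
      simp only [Matrix.add_apply, Matrix.sum_apply, Matrix.smul_apply, smul_eq_mul, mul_add,
        mul_sub, Finset.sum_add_distrib, Finset.sum_sub_distrib]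
      ring
    have hHVz : ∀ i ∈ Finset.Icc 1 n,
        lm.2 i * ((1 / (2 * (n : ℝ))) * dd n (HV n i) (a-1) (n-b-1)) = 0 := by
      intro i _
      rw [dd_HV i hp hq]
      ring
    have hNE : ∀ ab' ∈ idx n,
        lm.1 ab' * ((1 / (2 * (ab'.1 : ℝ) * (ab'.2 : ℝ)))
            * dd n (NESW n ab'.1 ab'.2) (a-1) (n-b-1))
          = if ab' = (a, b) then
              lm.1 (a, b) * ((1 / (2 * (a : ℝ) * (b : ℝ))) * (1 + if a + b = n then 1 else 0))
            else 0 := by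
      rintro ⟨a', b'⟩ hab'
      obtain ⟨ha', hb', hab''⟩ := mem_idx.mp hab'
      rw [dd_NESW hab'' hp hq]
      by_cases he : (a', b') = (a, b)
      · rw [if_pos he]
        simp only [Prod.mk.injEq] at he
        obtain ⟨h1, h2⟩ := he
        rw [h1, h2]
        have e1 : (if (a-1) + 1 = a ∧ (n-b-1) + 1 = n - b then (1:ℝ) else 0) = 1 :=
          if_pos ⟨by omega, by omega⟩
        have e2 : (if (a-1) + 1 = n - b ∧ (n-b-1) + 1 = a then (1:ℝ) else 0)
            = if a + b = n then 1 else 0 := by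
          split_ifs <;> first | rfl | omega
        rw [e1, e2]
      · rw [if_neg he]
        simp only [Prod.mk.injEq] at he
        have e1 : (if (a-1) + 1 = a' ∧ (n-b-1) + 1 = n - b' then (1:ℝ) else 0) = 0 := by
          rw [if_neg]; omega
        have e2 : (if (a-1) + 1 = n - b' ∧ (n-b-1) + 1 = a' then (1:ℝ) else 0) = 0 := by
          rw [if_neg]; omega
        rw [e1, e2]
        ring
    rw [key, Finset.sum_congr rfl hHVz, Finset.sum_const_zero, add_zero,
      Finset.sum_congr rfl hNE, Finset.sum_ite_eq', if_pos hmem]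
  -- conclude
  have hfst : lm.1 = lam1 n C := by
    funext ab
    obtain ⟨a, b⟩ := ab
    by_cases hmem : (a, b) ∈ idx n
    · obtain ⟨ha, hb, hab⟩ := mem_idx.mp hmem
      have hA : (a : ℝ) ≠ 0 := Nat.cast_ne_zero.mpr (by omega)
      have hB : (b : ℝ) ≠ 0 := Nat.cast_ne_zero.mpr (by omega)
      have hk := key1 a b hmem
      simp only [lam1, if_pos hmem]
      rw [hk]
      by_cases h2 : a + b = n
      · rw [if_pos h2, if_pos h2]
        field_simp
        try ring
      · rw [if_neg h2, if_neg h2]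
        field_simp
        try ring
    · rw [h3 (a, b) hmem]
      simp only [lam1, if_neg hmem]
  have hsnd : lm.2 = lam2 n C := by
    funext i
    by_cases hi : i ∈ Finset.Icc 1 n
    · simp only [Finset.mem_Icc] at hi
      have hi' : i - 1 < n := by omega
      have hd := diag ⟨i - 1, hi'⟩
      simp only at hd
      rw [show (i - 1) + 1 = i by omega] at hd
      rw [hd]
      simp only [lam2, if_pos (by simp [Finset.mem_Icc]; omega : i ∈ Finset.Icc 1 n)]
      rw [cext_eq C hi' hi']
    · rw [h4 i hi]
      simp only [lam2, if_neg hi]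
  exact Prod.ext hfst hsnd

end AuxSM

/-- Every matrix in the symmetric Monge polytope is a *unique* convex combination
of the matrices `(1/(2ab)) • NESW (a × b)` for `a, b ≥ 1` with `a + b ≤ n`, together with
the matrices `(1/(2n)) • HV i` for `1 ≤ i ≤ n`. -/
theorem sm_unique_convex_combination (n : ℕ) (hn : 2 ≤ n)
    (C : Matrix (Fin n) (Fin n) ℝ) (hC : C ∈ SM n) :
    ∃! lm : (ℕ × ℕ → ℝ) × (ℕ → ℝ),
      (∀ ab, 0 ≤ lm.1 ab) ∧ (∀ i, 0 ≤ lm.2 i) ∧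
      (∀ ab ∉ idx n, lm.1 ab = 0) ∧ (∀ i ∉ Finset.Icc 1 n, lm.2 i = 0) ∧
      ((∑ ab ∈ idx n, lm.1 ab) + ∑ i ∈ Finset.Icc 1 n, lm.2 i) = 1 ∧
      C = (∑ ab ∈ idx n,
            lm.1 ab • ((1 / (2 * (ab.1 : ℝ) * (ab.2 : ℝ))) • NESW n ab.1 ab.2)) +
          ∑ i ∈ Finset.Icc 1 n, lm.2 i • ((1 / (2 * (n : ℝ))) • HV n i) := by
  have hE := AuxSM.exist_eq hn hC
  refine ⟨(AuxSM.lam1 n C, AuxSM.lam2 n C),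
    ⟨fun ab => AuxSM.lam1_nonneg hC ab,
     fun i => AuxSM.lam2_nonneg hC i,
     fun ab h => by simp only [AuxSM.lam1, if_neg h],
     fun i h => by simp only [AuxSM.lam2, if_neg h],
     AuxSM.total hn (AuxSM.lam1 n C) (AuxSM.lam2 n C) hC.2.2.1 hE,
     hE⟩, ?_⟩
  rintro y ⟨-, -, h3, h4, -, h6⟩
  exact AuxSM.uniq hn hC y h3 h4 h6
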